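/- For every integer m ≥ 1, let r_n = Σ_{k=0}^{n} B_m(n,k) be the n-th row sum of the m-th triangle of the first family. Then for every n ≥ m, r_n = r_{n−1} + r_{n−2} + ⋯ + r_{n−m+1} + 2·r_{n−m}. -/

import Mathlib

/-- The `m`-th Pascal-like triangle of the first family: `B m n 0 = 1`,
`B m n n = 1` if `m ∣ n` and `0` otherwise, and Pascal's recurrence
`B m n k = B m (n-1) k + B m (n-1) (k-1)` for `0 < k < n`.
(Values with `k > n` are set to `0`.) -/
def B (m : ℕ) : ℕ → ℕ → ℕ
  | _, 0 => 1
  | 0, _ + 1 => 0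
  | n + 1, k + 1 =>
      if n + 1 = k + 1 then (if m ∣ (n + 1) then 1 else 0)
      else if n + 1 < k + 1 then 0
      else B m n (k + 1) + B m n k

lemma B_diag (m n : ℕ) : B m n n = if m ∣ n then 1 else 0 := by
  cases n with
  | zero => simp [B]
  | succ n => simp [B]

lemma B_succ (m n k : ℕ) (h : k + 1 ≤ n) :
    B m (n + 1) (k + 1) = B m n (k + 1) + B m n k := by
  have h1 : n + 1 ≠ k + 1 := by omega
  have h2 : ¬ (n + 1 < k + 1) := by omega
  simp [B, h1, h2]
  intro h3; omega

lemma step (m n : ℕ) :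
    (∑ k ∈ Finset.range (n + 2), B m (n + 1) k) + (if m ∣ n then 1 else 0)
      = 2 * (∑ k ∈ Finset.range (n + 1), B m n k) + (if m ∣ (n + 1) then 1 else 0) := by
  have L : (∑ k ∈ Finset.range (n + 2), B m (n + 1) k)
      = (∑ j ∈ Finset.range (n + 1), B m (n + 1) (j + 1)) + B m (n + 1) 0 :=
    Finset.sum_range_succ' _ _
  have L2 : (∑ j ∈ Finset.range (n + 1), B m (n + 1) (j + 1))
      = (∑ j ∈ Finset.range n, B m (n + 1) (j + 1)) + B m (n + 1) (n + 1) :=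
    Finset.sum_range_succ _ _
  have L3 : (∑ j ∈ Finset.range n, B m (n + 1) (j + 1))
      = (∑ j ∈ Finset.range n, B m n (j + 1)) + (∑ j ∈ Finset.range n, B m n j) := by
    rw [← Finset.sum_add_distrib]
    exact Finset.sum_congr rfl fun j hj => B_succ m n j (by
      have := Finset.mem_range.mp hj; omega)
  have R1 : (∑ k ∈ Finset.range (n + 1), B m n k)
      = (∑ j ∈ Finset.range n, B m n (j + 1)) + B m n 0 :=
    Finset.sum_range_succ' _ _
  have R2 : (∑ k ∈ Finset.range (n + 1), B m n k)
      = (∑ j ∈ Finset.range n, B m n j) + B m n n :=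
    Finset.sum_range_succ _ _
  have h0 : B m n 0 = 1 := by cases n <;> simp [B]
  have h0' : B m (n + 1) 0 = 1 := by simp [B]
  rw [L, L2, L3, B_diag, h0', two_mul]
  nth_rewrite 1 [R1]
  nth_rewrite 1 [R2]
  rw [B_diag, h0]
  ring

theorem stmt_4 (m : ℕ) (hm : 1 ≤ m) (r : ℕ → ℕ)
    (hr : ∀ n, r n = ∑ k ∈ Finset.range (n + 1), B m n k)
    (n : ℕ) (hn : m ≤ n) :
    r n = (∑ i ∈ Finset.Ico 1 m, r (n - i)) + 2 * r (n - m) := by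
  set c : ℕ → ℕ := fun j => if m ∣ j then 1 else 0 with hc
  have hstep : ∀ j, r (j + 1) + c j = 2 * r j + c (j + 1) := by
    intro j
    rw [hr, hr]
    exact step m j
  -- sum the step relation over the window
  have key : ∑ i ∈ Finset.range m, (r (n - i) + c (n - i - 1))
      = ∑ i ∈ Finset.range m, (2 * r (n - i - 1) + c (n - i)) := by
    refine Finset.sum_congr rfl fun i hi => ?_
    have hi' : i < m := Finset.mem_range.mp hi
    have h1 : n - i = (n - i - 1) + 1 := by omega
    rw [h1]
    exact hstep (n - i - 1)
  rw [Finset.sum_add_distrib, Finset.sum_add_distrib] at key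
  -- name the partial sums
  have e1 : ∑ i ∈ Finset.range m, r (n - i)
      = (∑ i ∈ Finset.range (m - 1), r (n - (i + 1))) + r n := by
    obtain ⟨m', rfl⟩ : ∃ m', m = m' + 1 := ⟨m - 1, by omega⟩
    simpa using Finset.sum_range_succ' (fun i => r (n - i)) m'
  have e2 : ∑ i ∈ Finset.range m, r (n - i - 1)
      = (∑ i ∈ Finset.range (m - 1), r (n - (i + 1))) + r (n - m) := by
    obtain ⟨m', rfl⟩ : ∃ m', m = m' + 1 := ⟨m - 1, by omega⟩
    rw [Finset.sum_range_succ (fun i => r (n - i - 1)) m']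
    have harg : n - m' - 1 = n - (m' + 1) := by omega
    rw [harg]
    simp only [Nat.add_sub_cancel]
    congr 1
  have e3 : ∑ i ∈ Finset.range m, c (n - i - 1)
      = ∑ i ∈ Finset.range m, c (n - i) := by
    obtain ⟨m', rfl⟩ : ∃ m', m = m' + 1 := ⟨m - 1, by omega⟩
    rw [Finset.sum_range_succ (fun i => c (n - i - 1)) m',
      Finset.sum_range_succ' (fun i => c (n - i)) m']
    have hcan : c (n - m' - 1) = c (n - 0) := by
      have hdvd : m' + 1 ∣ (n - (m' + 1)) ↔ m' + 1 ∣ n := by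
        constructor
        · intro h
          have := Nat.dvd_add h (dvd_refl (m' + 1))
          rwa [Nat.sub_add_cancel hn] at this
        · intro h
          exact (Nat.dvd_sub h (dvd_refl (m' + 1)))
      simp only [hc]
      have : n - m' - 1 = n - (m' + 1) := by omega
      rw [this, Nat.sub_zero]
      simp [hdvd]
    rw [hcan]
    congr 1
  rw [← Finset.mul_sum] at key
  rw [e1, e2, e3] at key
  have e4 : ∑ i ∈ Finset.Ico 1 m, r (n - i)
      = ∑ i ∈ Finset.range (m - 1), r (n - (i + 1)) := by
    rw [Finset.sum_Ico_eq_sum_range]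
    exact Finset.sum_congr rfl fun i _ => by congr 1; omega
  rw [e4]
  omega
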